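/- For probability measures P, Q on Ω and any x > 0, the hockey-stick divergence satisfies H_x(P‖Q) = E_{Z∼PLD(P‖Q)}[max(0, 1 − x e^{-Z})]. -/

import Mathlib

open MeasureTheory Filter Set
open scoped ENNReal NNReal

noncomputable def privacyLoss {Ω : Type*} [MeasurableSpace Ω] (P Q : Measure Ω) (ω : Ω) : EReal :=
  let p := P.rnDeriv (P + Q) ω
  let q := Q.rnDeriv (P + Q) ω
  if q = 0 then ⊤ else if p = 0 then ⊥ else ((Real.log (p.toReal / q.toReal) : ℝ) : EReal)

/-- The privacy loss distribution of `P` versus `Q`: the law of `log (dP/dQ)` under `P`. -/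
noncomputable def pld {Ω : Type*} [MeasurableSpace Ω] (P Q : Measure Ω) : Measure EReal :=
  P.map (privacyLoss P Q)

/-- The integrand `max (0, 1 - x e^{-z})` for `z : EReal` (so `z = ∞` gives `1`). -/
noncomputable def hsTerm (x : ℝ) (z : EReal) : ℝ :=
  if z = ⊤ then 1 else if z = ⊥ then 0 else max 0 (1 - x * Real.exp (-z.toReal))

/-- Hockey-stick divergence `H_x(P‖Q) = sup_E P(E) - x Q(E)` over measurable events. -/
noncomputable def hsDiv {Ω : Type*} [MeasurableSpace Ω] (x : ℝ) (P Q : Measure Ω) : ℝ :=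
  ⨆ E : {E : Set Ω // MeasurableSet E}, ((P E).toReal - x * (Q E).toReal)

lemma measurable_privacyLoss {Ω : Type*} [MeasurableSpace Ω] (P Q : Measure Ω) :
    Measurable (privacyLoss P Q) := by
  unfold privacyLoss
  simp only
  refine Measurable.ite ?_ measurable_const (Measurable.ite ?_ measurable_const ?_)
  · exact (Measure.measurable_rnDeriv Q (P + Q)) (measurableSet_singleton 0)
  · exact (Measure.measurable_rnDeriv P (P + Q)) (measurableSet_singleton 0)
  · exact measurable_coe_real_ereal.comp <| Real.measurable_log.comp <|
      ((Measure.measurable_rnDeriv P (P + Q)).ennreal_toReal).div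
        ((Measure.measurable_rnDeriv Q (P + Q)).ennreal_toReal)

lemma measurable_hsTerm (x : ℝ) : Measurable (hsTerm x) := by
  unfold hsTerm
  refine Measurable.ite (measurableSet_singleton ⊤) measurable_const
    (Measurable.ite (measurableSet_singleton ⊥) measurable_const ?_)
  exact measurable_const.max <| (measurable_const.sub <| measurable_const.mul
    ((measurable_ereal_toReal.neg).exp))

/-- `H_x(P‖Q) = E_{Z ∼ PLD(P‖Q)}[max (0, 1 - x e^{-Z})]` for probability measures `P, Q`
and `x > 0`. -/
theorem stmt1 {Ω : Type*} [MeasurableSpace Ω] (P Q : Measure Ω)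
    [IsProbabilityMeasure P] [IsProbabilityMeasure Q] (x : ℝ) (hx : 0 < x) :
    hsDiv x P Q = ∫ z, hsTerm x z ∂(pld P Q) := by
  set ν : Measure Ω := P + Q with hν
  have hPν : P ≪ ν := Measure.absolutelyContinuous_of_le (Measure.le_add_right le_rfl)
  have hQν : Q ≪ ν := Measure.absolutelyContinuous_of_le (Measure.le_add_left le_rfl)
  set p : Ω → ℝ := fun ω => (P.rnDeriv ν ω).toReal with hp
  set q : Ω → ℝ := fun ω => (Q.rnDeriv ν ω).toReal with hq
  have hpm : Measurable p := (Measure.measurable_rnDeriv P ν).ennreal_toReal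
  have hqm : Measurable q := (Measure.measurable_rnDeriv Q ν).ennreal_toReal
  have hpint : Integrable p ν := Measure.integrable_toReal_rnDeriv
  have hqint : Integrable q ν := Measure.integrable_toReal_rnDeriv
  set g : Ω → ℝ := fun ω => p ω - x * q ω with hg
  have hgint : Integrable g ν := hpint.sub (hqint.const_mul x)
  have hgm : Measurable g := hpm.sub (hqm.const_mul x)
  have hgpint : Integrable (fun ω => max 0 (g ω)) ν := by
    simpa [max_comm] using hgint.pos_part
  -- the candidate value
  set c : ℝ := ∫ ω, max 0 (g ω) ∂ν with hc
  -- each event gives value ≤ c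
  have hEint : ∀ E : Set Ω, MeasurableSet E →
      (P E).toReal - x * (Q E).toReal = ∫ ω in E, g ω ∂ν := by
    intro E hE
    rw [hg]
    rw [integral_sub (hpint.integrableOn) ((hqint.const_mul x).integrableOn),
      integral_const_mul, Measure.setIntegral_toReal_rnDeriv hPν,
      Measure.setIntegral_toReal_rnDeriv hQν]
    rfl
  have hbound : ∀ E : Set Ω, MeasurableSet E →
      (P E).toReal - x * (Q E).toReal ≤ c := by
    intro E hE
    rw [hEint E hE]
    calc ∫ ω in E, g ω ∂ν ≤ ∫ ω in E, max 0 (g ω) ∂ν :=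
          setIntegral_mono_on hgint.integrableOn hgpint.integrableOn hE
            (fun ω _ => le_max_right _ _)
      _ ≤ c := setIntegral_le_integral hgpint (Filter.Eventually.of_forall fun ω => le_max_left _ _)
  -- the optimal event
  set Estar : Set Ω := {ω | x * q ω < p ω} with hEstar
  have hEstarM : MeasurableSet Estar := measurableSet_lt (hqm.const_mul x) hpm
  have hattain : (P Estar).toReal - x * (Q Estar).toReal = c := by
    rw [hEint Estar hEstarM, hc]
    rw [← integral_indicator hEstarM]
    congr 1
    funext ω
    by_cases h : ω ∈ Estar
    · simp only [Set.indicator_of_mem h]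
      have : 0 < g ω := by simpa [hg, sub_pos] using (show x * q ω < p ω from h)
      exact ((max_eq_right this.le).symm)
    · simp only [Set.indicator_of_notMem h]
      have : g ω ≤ 0 := by
        have h' : ¬ x * q ω < p ω := h
        simp [hg, sub_nonpos, not_lt.mp h']
      exact (max_eq_left this).symm
  -- the sup equals c
  have hsup : hsDiv x P Q = c := by
    unfold hsDiv
    apply le_antisymm
    · exact ciSup_le fun E => hbound E.1 E.2
    · rw [← hattain]
      exact le_ciSup (f := fun E : {E : Set Ω // MeasurableSet E} =>
          ((P E).toReal - x * (Q E).toReal))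
        ⟨c, Set.forall_mem_range.mpr fun E => hbound E.1 E.2⟩ ⟨Estar, hEstarM⟩
  rw [hsup]
  -- now compute the RHS
  have hmap : ∫ z, hsTerm x z ∂(pld P Q) = ∫ ω, hsTerm x (privacyLoss P Q ω) ∂P := by
    unfold pld
    exact integral_map (measurable_privacyLoss P Q).aemeasurable
      ((measurable_hsTerm x).aestronglyMeasurable)
  rw [hmap, ← MeasureTheory.integral_rnDeriv_smul hPν]
  refine integral_congr_ae ?_
  filter_upwards [Measure.rnDeriv_lt_top P ν, Measure.rnDeriv_lt_top Q ν] with ω hplt hqlt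
  show max 0 (g ω) = (P.rnDeriv ν ω).toReal • hsTerm x (privacyLoss P Q ω)
  rw [smul_eq_mul]
  unfold privacyLoss
  simp only [← hν]
  by_cases hq0 : Q.rnDeriv ν ω = 0
  · rw [if_pos hq0]
    have : hsTerm x ⊤ = 1 := by simp [hsTerm]
    rw [this, mul_one]
    have hq' : q ω = 0 := by simp [hq, hq0]
    have : g ω = p ω := by simp [hg, hq']
    rw [this]
    exact max_eq_right ENNReal.toReal_nonneg
  · by_cases hp0 : P.rnDeriv ν ω = 0
    · rw [if_neg hq0, if_pos hp0]
      have : hsTerm x ⊥ = 0 := by simp [hsTerm]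
      rw [this, mul_zero]
      have hp' : p ω = 0 := by simp [hp, hp0]
      refine max_eq_left ?_
      have : g ω = -(x * q ω) := by simp [hg, hp']
      rw [this, neg_nonpos]
      exact mul_nonneg hx.le ENNReal.toReal_nonneg
    · simp only [if_neg hq0, if_neg hp0]
      have hpr : 0 < p ω := ENNReal.toReal_pos hp0 hplt.ne
      have hqr : 0 < q ω := ENNReal.toReal_pos hq0 hqlt.ne
      have hterm : hsTerm x ((Real.log (p ω / q ω) : ℝ) : EReal)
          = max 0 (1 - x * (q ω / p ω)) := by
        rw [hsTerm]
        rw [if_neg (EReal.coe_ne_top _), if_neg (EReal.coe_ne_bot _)]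
        congr 2
        rw [EReal.toReal_coe, ← Real.log_inv, Real.exp_log]
        · rw [inv_div]
        · positivity
      show max 0 (g ω) = p ω * hsTerm x ((Real.log (p ω / q ω) : ℝ) : EReal)
      rw [hterm, mul_max_of_nonneg _ _ hpr.le, mul_zero]
      congr 1
      field_simp [hg]
      simp [hg]
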